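/- Let α ≥ 2, m ≥ 1, N ≥ αm, μ > 0, and let r be an integer with α ≤ r < 1 + (N-1)/(α C(αm-1, α-1))^{1/(α-1)}. Then μ_s(α) = (μα/C(N,r)) ∑_{φ=α}^{min(r,αm)} (1/(H_φ - H_{φ-α})) C(αm, φ) C(N-αm, r-φ) < μ_s(1) = μ m C(N-1, r-1)/C(N,r). -/

import Mathlib

/-- The ℓ-th harmonic number H_ℓ = ∑_{i=1}^ℓ 1/i. -/
noncomputable def H (n : ℕ) : ℝ := ∑ i ∈ Finset.range n, 1 / (i + 1 : ℝ)

open Finset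

lemma H_gap {a φ : ℕ} (h : a ≤ φ) : (a : ℝ) / φ ≤ H φ - H (φ - a) := by
  rcases Nat.eq_zero_or_pos φ with hφ0 | hφ0
  · have : a = 0 := by omega
    simp [this, hφ0]
  have hsplit : H (φ - a) + ∑ i ∈ Ico (φ - a) φ, 1 / (i + 1 : ℝ) = H φ := by
    simp only [H, range_eq_Ico]
    exact Finset.sum_Ico_consecutive _ (Nat.zero_le _) (Nat.sub_le _ _)
  have hlow : (a : ℝ) / φ ≤ ∑ i ∈ Ico (φ - a) φ, 1 / (i + 1 : ℝ) := by
    have h1 : ∑ _i ∈ Ico (φ - a) φ, (1 / (φ : ℝ)) ≤ ∑ i ∈ Ico (φ - a) φ, 1 / (i + 1 : ℝ) := by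
      apply Finset.sum_le_sum
      intro i hi
      have hi2 : i < φ := (Finset.mem_Ico.mp hi).2
      apply one_div_le_one_div_of_le
      · positivity
      · exact_mod_cast Nat.succ_le_of_lt hi2
    have h2 : ∑ _i ∈ Ico (φ - a) φ, (1 / (φ : ℝ)) = (a : ℝ) * (1 / φ) := by
      rw [Finset.sum_const, Nat.card_Ico, Nat.sub_sub_self h, nsmul_eq_mul]
    rw [h2] at h1
    calc (a : ℝ) / φ = (a : ℝ) * (1 / φ) := by ring
      _ ≤ _ := h1
  linarith [hsplit, hlow]

lemma binom_step (t s d : ℕ) :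
    (s + d).choose s * (t + 1 + s + d) ≤ (t + 1 + s) * (s + 1 + d).choose (s + 1) := by
  have hid : (s + d + 1) * (s + d).choose s = (s + d + 1).choose (s + 1) * (s + 1) :=
    Nat.add_one_mul_choose_eq (s + d) s
  have hid' : (s + d + 1) * (s + d).choose s = (s + 1 + d).choose (s + 1) * (s + 1) := by
    rw [hid]; ring_nf
  apply Nat.le_of_mul_le_mul_right _ (show 0 < s + d + 1 by omega)
  calc (s + d).choose s * (t + 1 + s + d) * (s + d + 1)
      = ((s + d + 1) * (s + d).choose s) * (t + 1 + s + d) := by ring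
    _ = ((s + 1 + d).choose (s + 1) * (s + 1)) * (t + 1 + s + d) := by rw [hid']
    _ ≤ ((s + 1 + d).choose (s + 1)) * ((t + 1 + s) * (s + d + 1)) := by
        rw [Nat.mul_assoc]
        apply Nat.mul_le_mul_left
        nlinarith
    _ = (t + 1 + s) * (s + 1 + d).choose (s + 1) * (s + d + 1) := by ring

lemma binom_shift' (t : ℕ) : ∀ s d : ℕ,
    (s + d).choose s * (t + s + d) ^ t ≤ (t + s) ^ t * (t + s + d).choose (t + s) := by
  induction t with
  | zero => intro s d; simp
  | succ t ih =>
    intro s d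
    have key := binom_step t s d
    have ihh := ih (s + 1) d
    have e1 : t + (s + 1) = t + 1 + s := by ring
    rw [e1] at ihh
    calc (s + d).choose s * (t + 1 + s + d) ^ (t + 1)
        = ((s + d).choose s * (t + 1 + s + d)) * (t + 1 + s + d) ^ t := by
          rw [pow_succ]; ring
      _ ≤ ((t + 1 + s) * (s + 1 + d).choose (s + 1)) * (t + 1 + s + d) ^ t :=
          Nat.mul_le_mul_right _ key
      _ = (t + 1 + s) * ((s + 1 + d).choose (s + 1) * (t + 1 + s + d) ^ t) := by ring
      _ ≤ (t + 1 + s) * ((t + 1 + s) ^ t * (t + 1 + s + d).choose (t + 1 + s)) :=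
          Nat.mul_le_mul_left _ ihh
      _ = (t + 1 + s) ^ (t + 1) * (t + 1 + s + d).choose (t + 1 + s) := by
          rw [pow_succ]; ring

lemma binom_shift {D k t : ℕ} (h1 : t ≤ k) (h2 : k ≤ D) :
    (D - t).choose (k - t) * D ^ t ≤ k ^ t * D.choose k := by
  have h := binom_shift' t (k - t) (D - k)
  have e1 : k - t + (D - k) = D - t := by omega
  have e2 : t + (k - t) = k := by omega
  rw [e2] at h
  have e3 : k + (D - k) = D := by omega
  rw [e1, e3] at h
  exact h

lemma vandermonde_range (a b K : ℕ) :
    ∑ i ∈ range (K + 1), a.choose i * b.choose (K - i) = (a + b).choose K := by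
  rw [Nat.add_choose_eq, Finset.Nat.sum_antidiagonal_eq_sum_range_succ_mk]

lemma tail_bound {a t k : ℕ} (b : ℕ) (hta : t ≤ a) (htk : t ≤ k) :
    ∑ ψ ∈ Icc t k, a.choose ψ * b.choose (k - ψ) ≤ a.choose t * (a - t + b).choose (k - t) := by
  calc ∑ ψ ∈ Icc t k, a.choose ψ * b.choose (k - ψ)
      ≤ ∑ ψ ∈ Icc t k, ψ.choose t * (a.choose ψ * b.choose (k - ψ)) := by
        apply Finset.sum_le_sum
        intro ψ hψ
        have h1 : t ≤ ψ := (Finset.mem_Icc.mp hψ).1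
        exact Nat.le_mul_of_pos_left _ (Nat.choose_pos h1)
    _ = ∑ ψ ∈ Icc t k, a.choose t * ((a - t).choose (ψ - t) * b.choose (k - ψ)) := by
        apply Finset.sum_congr rfl
        intro ψ hψ
        have h1 : t ≤ ψ := (Finset.mem_Icc.mp hψ).1
        rcases le_or_gt ψ a with hψa | hψa
        · have hcm := Nat.choose_mul (n := a) h1
          calc ψ.choose t * (a.choose ψ * b.choose (k - ψ))
              = (a.choose ψ * ψ.choose t) * b.choose (k - ψ) := by ring
            _ = (a.choose t * (a - t).choose (ψ - t)) * b.choose (k - ψ) := by rw [hcm]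
            _ = a.choose t * ((a - t).choose (ψ - t) * b.choose (k - ψ)) := by ring
        · rw [Nat.choose_eq_zero_of_lt hψa,
            Nat.choose_eq_zero_of_lt (show a - t < ψ - t by omega)]
          ring
    _ = a.choose t * ∑ ψ ∈ Icc t k, (a - t).choose (ψ - t) * b.choose (k - ψ) := by
        rw [Finset.mul_sum]
    _ = a.choose t * ∑ i ∈ range (k - t + 1), (a - t).choose i * b.choose ((k - t) - i) := by
        congr 1
        rw [show Icc t k = Ico t (k + 1) by rw [Finset.Ico_add_one_right_eq_Icc],
          Finset.sum_Ico_eq_sum_range]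
        have hkt : k + 1 - t = k - t + 1 := by omega
        rw [hkt]
        apply Finset.sum_congr rfl
        intro i hi
        have hi' : i ≤ k - t := by
          have := Finset.mem_range.mp hi; omega
        have e1 : t + i - t = i := by omega
        have e2 : k - (t + i) = k - t - i := by omega
        rw [e1, e2]
    _ = a.choose t * (a - t + b).choose (k - t) := by rw [vandermonde_range]

lemma hr_to_nat {N r α c : ℕ} (hα : 2 ≤ α) (hc : 0 < c) (hr1 : 2 ≤ r) (hN : 2 ≤ N)
    (hr : (r : ℝ) < 1 + ((N : ℝ) - 1) / (((α : ℝ) * (c : ℝ)) ^ ((1 : ℝ) / ((α : ℝ) - 1)))) :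
    α * c * (r - 1) ^ (α - 1) < (N - 1) ^ (α - 1) := by
  set X : ℝ := (α : ℝ) * (c : ℝ) with hX
  have hXpos : 0 < X := by
    have h1 : (0:ℝ) < (α:ℝ) := by positivity
    have hc' : (0:ℝ) < (c:ℝ) := by exact_mod_cast hc
    exact mul_pos h1 hc'
  have hα' : (2:ℝ) ≤ (α:ℝ) := by exact_mod_cast hα
  have hr' : (2:ℝ) ≤ (r:ℝ) := by exact_mod_cast hr1
  have hz : (0:ℝ) < (α : ℝ) - 1 := by linarith
  set e : ℝ := (1 : ℝ) / ((α : ℝ) - 1) with he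
  have hXe : 0 < X ^ e := Real.rpow_pos_of_pos hXpos e
  have h1 : ((r : ℝ) - 1) * X ^ e < (N : ℝ) - 1 := by
    rw [← lt_div_iff₀ hXe]; linarith
  have hrpos : (0:ℝ) ≤ ((r : ℝ) - 1) * X ^ e := by nlinarith
  have h2 := Real.rpow_lt_rpow hrpos h1 hz
  have h3 : (((r : ℝ) - 1) * X ^ e) ^ ((α : ℝ) - 1)
      = ((r : ℝ) - 1) ^ ((α : ℝ) - 1) * X := by
    rw [Real.mul_rpow (by linarith) hXe.le, ← Real.rpow_mul hXpos.le]
    have he1 : e * ((α : ℝ) - 1) = 1 := by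
      rw [he]; field_simp
    rw [he1, Real.rpow_one]
  rw [h3] at h2
  have ecast : ((α - 1 : ℕ) : ℝ) = (α : ℝ) - 1 := by
    have : 1 ≤ α := by omega
    push_cast [Nat.cast_sub this]; ring
  have rcast : ((r - 1 : ℕ) : ℝ) = (r : ℝ) - 1 := by
    have : 1 ≤ r := by omega
    push_cast [Nat.cast_sub this]; ring
  have ncast : ((N - 1 : ℕ) : ℝ) = (N : ℝ) - 1 := by
    have : 1 ≤ N := by omega
    push_cast [Nat.cast_sub this]; ring
  have h4 : ((r - 1 : ℕ) : ℝ) ^ (α - 1 : ℕ) * X < ((N - 1 : ℕ) : ℝ) ^ (α - 1 : ℕ) := by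
    rw [rcast, ncast, ← Real.rpow_natCast ((r:ℝ) - 1) (α - 1),
      ← Real.rpow_natCast ((N:ℝ) - 1) (α - 1), ecast]
    exact h2
  rw [hX] at h4
  have h5 : ((r - 1) ^ (α - 1) * (α * c) : ℕ) < ((N - 1) ^ (α - 1) : ℕ) := by
    exact_mod_cast h4
  calc α * c * (r - 1) ^ (α - 1) = (r - 1) ^ (α - 1) * (α * c) := by ring
    _ < (N - 1) ^ (α - 1) := h5

theorem fixed_access_alpha_worse_than_one (N r α m : ℕ) (μ : ℝ)
    (hα : 2 ≤ α) (hm : 1 ≤ m) (hN : α * m ≤ N) (hμ : 0 < μ)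
    (hr1 : α ≤ r) (hrN : r ≤ N)
    (hr : (r : ℝ) <
      1 + ((N : ℝ) - 1) /
        (((α : ℝ) * ((α * m - 1).choose (α - 1) : ℝ)) ^ ((1 : ℝ) / ((α : ℝ) - 1)))) :
    (μ * α / (N.choose r : ℝ)) *
        ∑ φ ∈ Finset.Icc α (min r (α * m)),
          (1 / (H φ - H (φ - α))) * ((α * m).choose φ : ℝ) * ((N - α * m).choose (r - φ) : ℝ) <
      μ * m * ((N - 1).choose (r - 1) : ℝ) / (N.choose r : ℝ) := by
  have hαA : α ≤ α * m := Nat.le_mul_of_pos_right α hm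
  have hA2 : 2 ≤ α * m := le_trans hα hαA
  have hN2 : 2 ≤ N := le_trans hA2 hN
  have hr2 : 2 ≤ r := le_trans hα hr1
  -- natural number core inequality
  have hc : 0 < (α * m - 1).choose (α - 1) := Nat.choose_pos (by omega)
  have hh := hr_to_nat hα hc hr2 hN2 hr
  have hDk : 0 < (N - 1).choose (r - 1) := Nat.choose_pos (by omega)
  have hcore : α * ((α * m - 1).choose (α - 1) *
      ((N - 1 - (α - 1)).choose (r - 1 - (α - 1)))) < (N - 1).choose (r - 1) := by
    have hbs := binom_shift (D := N - 1) (k := r - 1) (t := α - 1)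
      (by omega) (by omega)
    refine lt_of_mul_lt_mul_right ?_ (Nat.zero_le ((N - 1) ^ (α - 1)))
    calc α * ((α * m - 1).choose (α - 1) * (N - 1 - (α - 1)).choose (r - 1 - (α - 1)))
          * (N - 1) ^ (α - 1)
        = (α * (α * m - 1).choose (α - 1)) *
          ((N - 1 - (α - 1)).choose (r - 1 - (α - 1)) * (N - 1) ^ (α - 1)) := by ring
      _ ≤ (α * (α * m - 1).choose (α - 1)) *
          ((r - 1) ^ (α - 1) * (N - 1).choose (r - 1)) :=
          Nat.mul_le_mul_left _ hbs
      _ = (α * (α * m - 1).choose (α - 1) * (r - 1) ^ (α - 1)) * (N - 1).choose (r - 1) := by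
          ring
      _ < (N - 1) ^ (α - 1) * (N - 1).choose (r - 1) :=
          (Nat.mul_lt_mul_right hDk).mpr hh
      _ = (N - 1).choose (r - 1) * (N - 1) ^ (α - 1) := by ring
  -- the natural-number sum inequality
  have hS : ∑ φ ∈ Finset.Icc α (min r (α * m)),
      φ * ((α * m).choose φ) * ((N - α * m).choose (r - φ)) < m * (N - 1).choose (r - 1) := by
    have step1 : ∑ φ ∈ Finset.Icc α (min r (α * m)),
        φ * ((α * m).choose φ) * ((N - α * m).choose (r - φ))
        = ∑ φ ∈ Finset.Icc α (min r (α * m)),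
          (α * m) * ((α * m - 1).choose (φ - 1) * ((N - α * m).choose (r - φ))) := by
      apply Finset.sum_congr rfl
      intro φ hφ
      have hφ1 : α ≤ φ := (Finset.mem_Icc.mp hφ).1
      have hid := Nat.add_one_mul_choose_eq (α * m - 1) (φ - 1)
      have eA : (α * m - 1) + 1 = α * m := by omega
      have eφ : (φ - 1) + 1 = φ := by omega
      rw [eA, eφ] at hid
      calc φ * ((α * m).choose φ) * ((N - α * m).choose (r - φ))
          = ((α * m).choose φ * φ) * ((N - α * m).choose (r - φ)) := by ring
        _ = ((α * m) * (α * m - 1).choose (φ - 1)) * ((N - α * m).choose (r - φ)) := by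
            rw [← hid]
        _ = (α * m) * ((α * m - 1).choose (φ - 1) * ((N - α * m).choose (r - φ))) := by ring
    rw [step1, ← Finset.mul_sum]
    have step2 : ∑ φ ∈ Finset.Icc α (min r (α * m)),
        (α * m - 1).choose (φ - 1) * ((N - α * m).choose (r - φ))
        ≤ ∑ φ ∈ Finset.Icc α r,
          (α * m - 1).choose (φ - 1) * ((N - α * m).choose (r - φ)) :=
      Finset.sum_le_sum_of_subset (Finset.Icc_subset_Icc_right (min_le_left _ _))
    have step3 : ∑ φ ∈ Finset.Icc α r,
        (α * m - 1).choose (φ - 1) * ((N - α * m).choose (r - φ))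
        = ∑ ψ ∈ Finset.Icc (α - 1) (r - 1),
          (α * m - 1).choose ψ * ((N - α * m).choose ((r - 1) - ψ)) := by
      rw [show Finset.Icc α r = Finset.Ico α (r + 1) by rw [Finset.Ico_add_one_right_eq_Icc],
        show Finset.Icc (α - 1) (r - 1) = Finset.Ico (α - 1) r by
          rw [← Finset.Ico_add_one_right_eq_Icc]; congr 1; omega,
        Finset.sum_Ico_eq_sum_range, Finset.sum_Ico_eq_sum_range]
      have er : r + 1 - α = r - (α - 1) := by omega
      rw [er]
      apply Finset.sum_congr rfl
      intro i _
      have e1 : α + i - 1 = α - 1 + i := by omega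
      have e2 : r - (α + i) = r - 1 - (α - 1 + i) := by omega
      rw [e1, e2]
    have step4 := tail_bound (a := α * m - 1) (t := α - 1) (k := r - 1) (N - α * m)
      (by omega) (by omega)
    have e5 : α * m - 1 - (α - 1) + (N - α * m) = N - 1 - (α - 1) := by omega
    rw [e5] at step4
    calc (α * m) * ∑ φ ∈ Finset.Icc α (min r (α * m)),
          (α * m - 1).choose (φ - 1) * ((N - α * m).choose (r - φ))
        ≤ (α * m) * ∑ ψ ∈ Finset.Icc (α - 1) (r - 1),
          (α * m - 1).choose ψ * ((N - α * m).choose ((r - 1) - ψ)) := by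
          apply Nat.mul_le_mul_left
          rw [← step3]; exact step2
      _ ≤ (α * m) * ((α * m - 1).choose (α - 1) *
          ((N - 1 - (α - 1)).choose (r - 1 - (α - 1)))) := Nat.mul_le_mul_left _ step4
      _ = m * (α * ((α * m - 1).choose (α - 1) *
          ((N - 1 - (α - 1)).choose (r - 1 - (α - 1))))) := by ring
      _ < m * (N - 1).choose (r - 1) := by
          exact (Nat.mul_lt_mul_left (by omega)).mpr hcore
  -- pass to the reals
  have hCn : (0:ℝ) < (N.choose r : ℝ) := by
    exact_mod_cast Nat.choose_pos hrN
  have hmain : (α : ℝ) * (∑ φ ∈ Finset.Icc α (min r (α * m)),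
      (1 / (H φ - H (φ - α))) * ((α * m).choose φ : ℝ) * ((N - α * m).choose (r - φ) : ℝ))
      < (m : ℝ) * ((N - 1).choose (r - 1) : ℝ) := by
    have hle : (α : ℝ) * (∑ φ ∈ Finset.Icc α (min r (α * m)),
        (1 / (H φ - H (φ - α))) * ((α * m).choose φ : ℝ) * ((N - α * m).choose (r - φ) : ℝ))
        ≤ ∑ φ ∈ Finset.Icc α (min r (α * m)),
          (φ : ℝ) * ((α * m).choose φ : ℝ) * ((N - α * m).choose (r - φ) : ℝ) := by
      rw [Finset.mul_sum]
      apply Finset.sum_le_sum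
      intro φ hφ
      have hαφ : α ≤ φ := (Finset.mem_Icc.mp hφ).1
      have hφpos : (0:ℝ) < (φ:ℝ) := by
        have : 0 < φ := by omega
        exact_mod_cast this
      have hgap := H_gap (a := α) hαφ
      have hαpos : (0:ℝ) < (α:ℝ) := by positivity
      have hgap0 : 0 < H φ - H (φ - α) :=
        lt_of_lt_of_le (by positivity) hgap
      have key : (α:ℝ) * (1 / (H φ - H (φ - α))) ≤ (φ:ℝ) := by
        rw [mul_one_div, div_le_iff₀ hgap0]
        calc (α:ℝ) = (φ:ℝ) * ((α:ℝ)/(φ:ℝ)) := by field_simp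
          _ ≤ (φ:ℝ) * (H φ - H (φ - α)) := mul_le_mul_of_nonneg_left hgap hφpos.le
      calc (α:ℝ) * ((1 / (H φ - H (φ - α))) * ((α * m).choose φ : ℝ) *
            ((N - α * m).choose (r - φ) : ℝ))
          = ((α:ℝ) * (1 / (H φ - H (φ - α)))) *
            (((α * m).choose φ : ℝ) * ((N - α * m).choose (r - φ) : ℝ)) := by ring
        _ ≤ (φ:ℝ) * (((α * m).choose φ : ℝ) * ((N - α * m).choose (r - φ) : ℝ)) := by
            apply mul_le_mul_of_nonneg_right key (by positivity)
        _ = (φ : ℝ) * ((α * m).choose φ : ℝ) * ((N - α * m).choose (r - φ) : ℝ) := by ring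
    have hcast : ∑ φ ∈ Finset.Icc α (min r (α * m)),
        (φ : ℝ) * ((α * m).choose φ : ℝ) * ((N - α * m).choose (r - φ) : ℝ)
        = ((∑ φ ∈ Finset.Icc α (min r (α * m)),
          φ * ((α * m).choose φ) * ((N - α * m).choose (r - φ)) : ℕ) : ℝ) := by
      push_cast
      rfl
    have hlt : ((∑ φ ∈ Finset.Icc α (min r (α * m)),
        φ * ((α * m).choose φ) * ((N - α * m).choose (r - φ)) : ℕ) : ℝ)
        < (m : ℝ) * ((N - 1).choose (r - 1) : ℝ) := by
      exact_mod_cast hS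
    calc (α : ℝ) * _ ≤ _ := hle
      _ = _ := hcast
      _ < _ := hlt
  have hfin := mul_lt_mul_of_pos_left hmain (div_pos hμ hCn)
  calc (μ * α / (N.choose r : ℝ)) *
        ∑ φ ∈ Finset.Icc α (min r (α * m)),
          (1 / (H φ - H (φ - α))) * ((α * m).choose φ : ℝ) * ((N - α * m).choose (r - φ) : ℝ)
      = (μ / (N.choose r : ℝ)) * ((α : ℝ) * ∑ φ ∈ Finset.Icc α (min r (α * m)),
          (1 / (H φ - H (φ - α))) * ((α * m).choose φ : ℝ) *
          ((N - α * m).choose (r - φ) : ℝ)) := by ring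
    _ < (μ / (N.choose r : ℝ)) * ((m : ℝ) * ((N - 1).choose (r - 1) : ℝ)) := hfin
    _ = μ * m * ((N - 1).choose (r - 1) : ℝ) / (N.choose r : ℝ) := by ring
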